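/- Let T1 = ([n], E1) and T2 = ([n], E2) be two tournaments on the vertex set {1,...,n}, and let i, j be vertices with i ≠ j. If the relation i ⇒ j fails (i.e., not (i = j ∨ (i,j) ∈ E1 ∨ (i,j) ∈ E2 ∨ ∃k, (i,k) ∈ E1 ∧ (k,j) ∈ E2)), then the out-degree of i in T1 is strictly smaller than the out-degree of j in T2, i.e., |Γ1(i)| < |Γ2(j)|. -/
import Mathlib

/-- For tournaments `T1`, `T2` on `{1,…,n}` and distinct vertices `i ≠ j`,
if `i ⇒ j` fails then the out-degree of `i` in `T1` is strictly smaller than the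
out-degree of `j` in `T2`. -/
theorem not_reach_outdeg_lt (n : ℕ)
    (E1 E2 : Fin n → Fin n → Prop)
    [DecidableRel E1] [DecidableRel E2]
    (hT1irr : ∀ i, ¬ E1 i i)
    (hT1 : ∀ i j : Fin n, i ≠ j → (E1 i j ↔ ¬ E1 j i))
    (hT2irr : ∀ i, ¬ E2 i i)
    (hT2 : ∀ i j : Fin n, i ≠ j → (E2 i j ↔ ¬ E2 j i))
    (i j : Fin n) (hij : i ≠ j)
    (hnot : ¬ (i = j ∨ E1 i j ∨ E2 i j ∨ ∃ k : Fin n, E1 i k ∧ E2 k j)) :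
    (Finset.univ.filter (fun k => E1 i k)).card <
      (Finset.univ.filter (fun k => E2 j k)).card := by
  push_neg at hnot
  obtain ⟨-, h1, h2, h3⟩ := hnot
  apply Finset.card_lt_card
  constructor
  · intro k hk
    simp only [Finset.mem_filter, Finset.mem_univ, true_and] at hk ⊢
    have hkj : k ≠ j := fun h => h1 (h ▸ hk)
    exact (hT2 j k hkj.symm).mpr (h3 k hk)
  · intro hsub
    have : i ∈ Finset.univ.filter (fun k => E2 j k) := by
      simp only [Finset.mem_filter, Finset.mem_univ, true_and]
      exact (hT2 j i hij.symm).mpr h2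
    have := hsub this
    simp only [Finset.mem_filter, Finset.mem_univ, true_and] at this
    exact hT1irr i this
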